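/- For every natural number n, define I(m) = ∑_{j=0}^{⌊m/2⌋} C(m, 2j) · (2j−1)!!, the number of partial matchings of an m-element set. Then I(2n) = ∑_{k=0}^{n} k! · C(n,k)² · I(n−k)², where C denotes the binomial coefficient and (2j−1)!! = ∏_{i=1}^{j} (2i−1) with the empty product equal to 1. -/
import Mathlib


/-- The odd double factorial `(2j−1)!! = ∏_{i=1}^{j} (2i−1)`, with the empty product equal
to `1`. -/
def oddDoubleFactorial (j : ℕ) : ℕ := ∏ i ∈ Finset.range j, (2 * i + 1)

/-- `I(m) = ∑_{j=0}^{⌊m/2⌋} C(m, 2j) · (2j−1)!!`, the number of partial matchings of an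
`m`-element set. -/
def partialMatchings (m : ℕ) : ℕ :=
  ∑ j ∈ Finset.range (m / 2 + 1), m.choose (2 * j) * oddDoubleFactorial j

/-- `I(2n) = ∑_{k=0}^{n} k! · C(n,k)² · I(n−k)²`. -/
lemma Jext (m N : ℕ) (h : m / 2 + 1 ≤ N) :
    partialMatchings m = ∑ j ∈ Finset.range N, m.choose (2 * j) * oddDoubleFactorial j := by
  rw [partialMatchings]
  apply Finset.sum_subset (Finset.range_subset_range.2 h)
  intro j _ hj
  simp only [Finset.mem_range, not_lt] at hj
  rw [Nat.choose_eq_zero_of_lt (by omega), zero_mul]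

lemma Jstep : ∀ a : ℕ,
    partialMatchings (a + 1) = partialMatchings a + a * partialMatchings (a - 1)
  | 0 => by decide
  | (b + 1) => by
    have h2 := Jext (b + 2) (b + 3) (by omega)
    have h1 := Jext (b + 1) (b + 3) (by omega)
    have h0 := Jext b (b + 2) (by omega)
    have key : ∀ j ∈ Finset.range (b + 2),
        (b + 2).choose (2 * (j + 1)) * oddDoubleFactorial (j + 1)
          = (b + 1).choose (2 * (j + 1)) * oddDoubleFactorial (j + 1)
            + (b + 1) * (b.choose (2 * j) * oddDoubleFactorial j) := by
      intro j _
      have hD : oddDoubleFactorial (j + 1) = oddDoubleFactorial j * (2 * j + 1) :=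
        Finset.prod_range_succ _ j
      have hc : (b + 1) * b.choose (2 * j) = (b + 1).choose (2 * j + 1) * (2 * j + 1) :=
        Nat.add_one_mul_choose_eq b (2 * j)
      have e1 : 2 * (j + 1) = 2 * j + 1 + 1 := by ring
      rw [e1, Nat.choose_succ_succ (b + 1) (2 * j + 1), hD, add_mul, add_comm]
      congr 1
      calc (b + 1).choose (2 * j + 1) * (oddDoubleFactorial j * (2 * j + 1))
          = ((b + 1).choose (2 * j + 1) * (2 * j + 1)) * oddDoubleFactorial j := by ring
        _ = ((b + 1) * b.choose (2 * j)) * oddDoubleFactorial j := by rw [hc]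
        _ = (b + 1) * (b.choose (2 * j) * oddDoubleFactorial j) := by ring
    show partialMatchings (b + 2) = partialMatchings (b + 1) + (b + 1) * partialMatchings b
    rw [h2, h1, h0, Finset.sum_range_succ' _ (b + 2),
      Finset.sum_range_succ' (fun j => (b + 1).choose (2 * j) * oddDoubleFactorial j) (b + 2),
      Finset.sum_congr rfl key, Finset.sum_add_distrib, Finset.mul_sum]
    simp [Nat.choose_zero_right]
    ring

def T (m n : ℕ) : ℕ :=
  ∑ k ∈ Finset.range (n + 1),
    k.factorial * m.choose k * n.choose k * partialMatchings (m - k) * partialMatchings (n - k)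

lemma fshift (m k : ℕ) :
    (k + 1).factorial * m.choose (k + 1) * partialMatchings (m - (k + 1))
      = m * (k.factorial * (m - 1).choose k * partialMatchings (m - 1 - k)) := by
  have hJ : partialMatchings (m - (k + 1)) = partialMatchings (m - 1 - k) := by
    congr 1; omega
  match m with
  | 0 => simp [Nat.choose_eq_zero_of_lt (Nat.succ_pos k)]
  | (m' + 1) =>
    have hc : (m' + 1) * m'.choose k = (m' + 1).choose (k + 1) * (k + 1) :=
      Nat.add_one_mul_choose_eq m' k
    rw [hJ, Nat.factorial_succ]
    calc (k + 1) * k.factorial * (m' + 1).choose (k + 1) * partialMatchings (m' + 1 - 1 - k)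
        = ((m' + 1).choose (k + 1) * (k + 1)) * (k.factorial * partialMatchings (m' + 1 - 1 - k)) := by
          ring
      _ = ((m' + 1) * m'.choose k) * (k.factorial * partialMatchings (m' + 1 - 1 - k)) := by
          rw [hc]
      _ = (m' + 1) * (k.factorial * (m' + 1 - 1).choose k * partialMatchings (m' + 1 - 1 - k)) := by
          simp; ring

lemma chooseId (n k : ℕ) : (n + 1 - k) * (n + 1).choose k = (n + 1) * n.choose k := by
  have h1 : (n + 1).choose (k + 1) * (k + 1) = (n + 1).choose k * (n + 1 - k) :=
    Nat.choose_succ_right_eq (n + 1) k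
  have h2 : (n + 1) * n.choose k = (n + 1).choose (k + 1) * (k + 1) :=
    Nat.add_one_mul_choose_eq n k
  rw [h2, h1]; ring

lemma TJ : ∀ n m : ℕ, partialMatchings (m + n) = T m n := by
  intro n
  induction n using Nat.strong_induction_on with
  | _ n ih =>
    match n with
    | 0 =>
      intro m
      have j0 : partialMatchings 0 = 1 := rfl
      simp [T, Finset.sum_range_one, j0]
    | 1 =>
      intro m
      have j0 : partialMatchings 0 = 1 := rfl
      have j1 : partialMatchings 1 = 1 := rfl
      have := Jstep m
      simp [T, Finset.sum_range_succ, Finset.sum_range_one, j0, j1, Nat.choose_one_right]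
      omega
    | (n + 2) =>
      intro m
      have ih1 := ih (n + 1) (by omega)
      have ih0 := ih n (by omega)
      -- Left side
      have hL : partialMatchings (m + (n + 2))
          = T m (n + 1) + ((n + 1) * T m n + m * T (m - 1) (n + 1)) := by
        have e : m + (n + 2) = (m + n + 1) + 1 := by ring
        have e' : m + n + 1 - 1 = m + n := by omega
        have hmT : m * partialMatchings (m + n) = m * T (m - 1) (n + 1) := by
          match m with
          | 0 => simp
          | (m' + 1) =>
            have := ih1 m'
            have e'' : m' + (n + 1) = m' + 1 + n := by ring
            rw [e''] at this
            rw [this]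
            simp
        have h1 : partialMatchings (m + n + 1) = T m (n + 1) := by
          have := ih1 m
          have e'' : m + (n + 1) = m + n + 1 := by ring
          rwa [e''] at this
        rw [e, Jstep (m + n + 1), e', h1, ih0 m] at *
        have h2 : (m + n + 1) * T m n = (n + 1) * T m n + m * T m n := by ring
        omega
      rw [hL]
      -- Right side: key sum identity
      have termA : ∀ j ∈ Finset.range (n + 2),
          (j + 1).factorial * m.choose (j + 1) * (n + 2).choose (j + 1)
              * partialMatchings (m - (j + 1)) * partialMatchings (n + 2 - (j + 1))
            = (j + 1).factorial * m.choose (j + 1) * (n + 1).choose (j + 1)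
                * partialMatchings (m - (j + 1)) * partialMatchings (n + 2 - (j + 1))
              + m * (j.factorial * (m - 1).choose j * (n + 1).choose j
                  * partialMatchings (m - 1 - j) * partialMatchings (n + 1 - j)) := by
        intro j _
        have hs : n + 2 - (j + 1) = n + 1 - j := by omega
        have hp : (n + 2).choose (j + 1) = (n + 1).choose j + (n + 1).choose (j + 1) :=
          Nat.choose_succ_succ (n + 1) j
        have hf := fshift m j
        rw [hs, hp]
        calc (j + 1).factorial * m.choose (j + 1)
              * ((n + 1).choose j + (n + 1).choose (j + 1))
              * partialMatchings (m - (j + 1)) * partialMatchings (n + 1 - j)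
            = (j + 1).factorial * m.choose (j + 1) * (n + 1).choose (j + 1)
                * partialMatchings (m - (j + 1)) * partialMatchings (n + 1 - j)
              + ((j + 1).factorial * m.choose (j + 1) * partialMatchings (m - (j + 1)))
                * ((n + 1).choose j * partialMatchings (n + 1 - j)) := by ring
          _ = _ := by rw [hf]; ring
      have termB : ∀ k ∈ Finset.range (n + 2),
          k.factorial * m.choose k * (n + 1).choose k
              * partialMatchings (m - k) * partialMatchings (n + 2 - k)
            = k.factorial * m.choose k * (n + 1).choose k
                * partialMatchings (m - k) * partialMatchings (n + 1 - k)
              + (n + 1) * (k.factorial * m.choose k * n.choose k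
                  * partialMatchings (m - k) * partialMatchings (n - k)) := by
        intro k hk
        simp only [Finset.mem_range] at hk
        have e1 : n + 2 - k = (n + 1 - k) + 1 := by omega
        have e2 : n + 1 - k - 1 = n - k := by omega
        have hcid := chooseId n k
        rw [e1, Jstep (n + 1 - k), e2]
        calc k.factorial * m.choose k * (n + 1).choose k * partialMatchings (m - k)
              * (partialMatchings (n + 1 - k) + (n + 1 - k) * partialMatchings (n - k))
            = k.factorial * m.choose k * (n + 1).choose k * partialMatchings (m - k)
                * partialMatchings (n + 1 - k)
              + (k.factorial * m.choose k * partialMatchings (m - k))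
                * (((n + 1 - k) * (n + 1).choose k) * partialMatchings (n - k)) := by ring
          _ = _ := by rw [hcid]; ring
      -- assemble
      have hT2 : T m (n + 2)
          = (∑ k ∈ Finset.range (n + 3),
              k.factorial * m.choose k * (n + 1).choose k
                * partialMatchings (m - k) * partialMatchings (n + 2 - k))
            + m * T (m - 1) (n + 1) := by
        rw [T, Finset.sum_range_succ' _ (n + 2), Finset.sum_congr rfl termA,
          Finset.sum_add_distrib,
          Finset.sum_range_succ'
            (fun k => k.factorial * m.choose k * (n + 1).choose k
              * partialMatchings (m - k) * partialMatchings (n + 2 - k)) (n + 2),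
          T, Finset.mul_sum]
        simp [Nat.choose_zero_right]
        ring
      have hH : (∑ k ∈ Finset.range (n + 3),
            k.factorial * m.choose k * (n + 1).choose k
              * partialMatchings (m - k) * partialMatchings (n + 2 - k))
          = T m (n + 1) + (n + 1) * T m n := by
        rw [Finset.sum_range_succ, Nat.choose_succ_self (n + 1)]
        simp only [mul_zero, zero_mul, add_zero]
        rw [Finset.sum_congr rfl termB, Finset.sum_add_distrib, T, T, Finset.mul_sum,
          Finset.sum_range_succ
            (fun k => (n + 1) * (k.factorial * m.choose k * n.choose k
              * partialMatchings (m - k) * partialMatchings (n - k))) (n + 1),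
          Nat.choose_succ_self n]
        simp
      rw [hT2, hH]
      ring

theorem stmt11 (n : ℕ) :
    partialMatchings (2 * n)
      = ∑ k ∈ Finset.range (n + 1),
          k.factorial * (n.choose k) ^ 2 * (partialMatchings (n - k)) ^ 2 := by
  have h := TJ n n
  rw [show 2 * n = n + n by ring, h, T]
  exact Finset.sum_congr rfl fun k _ => by ring
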